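/- Fix r ≥ 1 and define Φ(s) = s(1+s^r)²/(1+(1+r)s^r). Then Φ(s) < 2 for all s ∈ (0,1]. -/
import Mathlib

open Real

theorem phi_lt_two_on_Ioc (r : ℝ) (hr : 1 ≤ r) (s : ℝ) (hs0 : 0 < s) (hs1 : s ≤ 1) :
    s * (1 + s ^ r) ^ 2 / (1 + (1 + r) * s ^ r) < 2 := by
  have hx0 : 0 < s ^ r := Real.rpow_pos_of_pos hs0 r
  have hx1 : s ^ r ≤ 1 := Real.rpow_le_one hs0.le hs1 (by linarith)
  have hd : 0 < 1 + (1 + r) * s ^ r := by nlinarith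
  rw [div_lt_iff₀ hd]
  nlinarith [mul_pos hx0 hx0, mul_le_one₀ hx1 hx0.le hx1, sq_nonneg (1 - s ^ r)]
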